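/- For positive invertible operators A, B and ν ∈ [0,1] with r = min{ν, 1−ν}, the refined Young inequality (1−ν)A + νB ≥ A♯_ν B + 2r((A+B)/2 − A♯_{1/2}B) holds in the Loewner order. -/

import Mathlib

open NNReal

set_option maxHeartbeats 1000000

variable {H : Type*} [NormedAddCommGroup H] [InnerProductSpace ℂ H] [CompleteSpace H]

private lemma scalar_refined_young {ν r x : ℝ} (hν0 : 0 ≤ ν) (hν1 : ν ≤ 1)
    (hr : r = min ν (1 - ν)) (hx : 0 ≤ x) :
    x ^ ν + 2 * r * ((1 + x) / 2 - x ^ ((1:ℝ)/2)) ≤ (1 - ν) + ν * x := by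
  set s := x ^ ((1:ℝ)/2) with hs
  have hs0 : 0 ≤ s := Real.rpow_nonneg hx _
  rcases le_total ν (1/2) with hc | hc
  · rw [hr, min_eq_left (by linarith)]
    have hgm := Real.geom_mean_le_arith_mean2_weighted (by linarith : (0:ℝ) ≤ 1-2*ν)
      (by linarith : (0:ℝ) ≤ 2*ν) zero_le_one hs0 (by ring)
    have hsp : s ^ (2*ν) = x ^ ν := by
      rw [hs, ← Real.rpow_mul hx]; ring_nf
    rw [Real.one_rpow, one_mul, hsp] at hgm
    nlinarith [Real.rpow_natCast s 2, Real.rpow_mul hx ((1:ℝ)/2) 2]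
  · rw [hr, min_eq_right (by linarith)]
    have hgm := Real.geom_mean_le_arith_mean2_weighted (by linarith : (0:ℝ) ≤ 2*ν-1)
      (by linarith : (0:ℝ) ≤ 2-2*ν) hx hs0 (by ring)
    have hsp : x ^ (2*ν-1) * s ^ (2-2*ν) = x ^ ν := by
      rw [hs, ← Real.rpow_mul hx, ← Real.rpow_add' hx (by norm_num; linarith)]
      ring_nf
    rw [hsp] at hgm
    nlinarith [Real.rpow_natCast s 2, Real.rpow_mul hx ((1:ℝ)/2) 2]

private lemma rpow_eq_cfc_real (T : H →L[ℂ] H) (hT : 0 ≤ T) (t : ℝ) :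
    T ^ t = cfc (fun x : ℝ => x ^ t) T := by
  rw [CFC.rpow_def, cfc_nnreal_eq_real _ T hT]
  apply cfc_congr
  intro x hx
  have hx0 : 0 ≤ x := spectrum_nonneg_of_nonneg hT hx
  simp [NNReal.coe_rpow, Real.coe_toNNReal x hx0]


private lemma key_cfc_ineq (T : H →L[ℂ] H) (hT : 0 ≤ T) (ν r : ℝ)
    (hν0 : 0 ≤ ν) (hν1 : ν ≤ 1) (hr : r = min ν (1 - ν)) :
    T ^ ν + (2*r) • ((1/2:ℝ) • (1 + T) - T ^ ((1:ℝ)/2)) ≤ (1 - ν) • 1 + ν • T := by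
  have hTsa : IsSelfAdjoint T := .of_nonneg hT
  have hcont1 : ContinuousOn (fun x : ℝ => x ^ ν) (spectrum ℝ T) :=
    fun x _ => (Real.continuousAt_rpow_const x ν (Or.inr hν0)).continuousWithinAt
  have hcont2 : ContinuousOn (fun x : ℝ => x ^ ((1:ℝ)/2)) (spectrum ℝ T) :=
    fun x _ => (Real.continuousAt_rpow_const x _ (Or.inr (by norm_num))).continuousWithinAt
  have lhs_eq :
      cfc (fun x : ℝ => x ^ ν + (2*r) * ((1/2) * (1 + x) - x ^ ((1:ℝ)/2))) T
        = T ^ ν + (2*r) • ((1/2:ℝ) • (1 + T) - T ^ ((1:ℝ)/2)) := by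
    rw [rpow_eq_cfc_real T hT ν, rpow_eq_cfc_real T hT ((1:ℝ)/2)]
    rw [cfc_add _ _ _ hcont1 (by fun_prop (disch := assumption))]
    congr 1
    rw [show (fun x : ℝ => (2*r) * ((1/2) * (1 + x) - x ^ ((1:ℝ)/2)))
        = (fun x : ℝ => (2*r) • ((1/2) * (1 + x) - x ^ ((1:ℝ)/2))) from rfl,
      cfc_smul _ _ _ (by fun_prop (disch := assumption))]
    congr 1
    rw [cfc_sub _ _ _ (by fun_prop) hcont2]
    congr 1
    rw [show (fun x : ℝ => (1/2 : ℝ) * (1 + x)) = (fun x : ℝ => (1/2:ℝ) • (1 + x)) from rfl,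
      cfc_smul _ _ _ (by fun_prop)]
    congr 1
    rw [cfc_add _ _ _ (by fun_prop) (by fun_prop), cfc_const_one ℝ T, cfc_id' ℝ T]
  have rhs_eq : cfc (fun x : ℝ => (1 - ν) + ν * x) T = (1 - ν) • 1 + ν • T := by
    rw [cfc_add _ _ _ (by fun_prop) (by fun_prop)]
    congr 1
    · rw [show (fun _ : ℝ => (1 - ν)) = (fun x : ℝ => (1-ν) • (1:ℝ)) by
        funext x; simp, cfc_smul _ _ _ (by fun_prop), cfc_const_one ℝ T]
    · show cfc (fun x : ℝ => ν • x) T = ν • T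
      rw [cfc_smul _ _ _ (by fun_prop), cfc_id' ℝ T]
  rw [← lhs_eq, ← rhs_eq]
  apply cfc_mono
  · intro x hx
    have hx0 : 0 ≤ x := spectrum_nonneg_of_nonneg hT hx
    have := scalar_refined_young hν0 hν1 hr hx0
    linarith
  · exact hcont1.add (by fun_prop (disch := assumption))
  · exact continuousOn_const.add (continuousOn_const.mul continuousOn_id)

/-- The weighted operator geometric mean `A ♯_ν B = A^{1/2} (A^{-1/2} B A^{-1/2})^ν A^{1/2}`. -/
noncomputable def geomMean (A B : H →L[ℂ] H) (ν : ℝ) : H →L[ℂ] H :=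
  A ^ ((1:ℝ)/2) * (A ^ (-(1:ℝ)/2) * B * A ^ (-(1:ℝ)/2)) ^ ν * A ^ ((1:ℝ)/2)

theorem refined_young_operator (A B : H →L[ℂ] H) (hA : 0 ≤ A) (hB : 0 ≤ B)
    (hAu : IsUnit A) (hBu : IsUnit B) (ν : ℝ) (hν : ν ∈ Set.Icc (0:ℝ) 1)
    (r : ℝ) (hr : r = min ν (1 - ν)) :
    geomMean A B ν + (2 * r) • ((1/2 : ℝ) • (A + B) - geomMean A B (1/2)) ≤
      (1 - ν) • A + ν • B := by
  obtain ⟨hν0, hν1⟩ := hν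
  simp only [geomMean]
  set c := A ^ ((1:ℝ)/2) with hc
  set d := A ^ (-(1:ℝ)/2) with hd
  set T := d * B * d with hTdef
  have h0 : (0:ℝ≥0) ∉ spectrum ℝ≥0 A := spectrum.zero_notMem ℝ≥0 hAu
  have hc0 : 0 ≤ c := CFC.rpow_nonneg
  have hd0 : 0 ≤ d := CFC.rpow_nonneg
  have hcd : c * d = 1 := by
    have := CFC.rpow_add (a := A) (x := (1:ℝ)/2) (y := -((1:ℝ)/2)) hAu
    norm_num at this
    rw [hc, hd, show -(1:ℝ)/2 = -((1:ℝ)/2) by norm_num, ← this, CFC.rpow_zero A]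
  have hdc : d * c = 1 := by
    have := CFC.rpow_add (a := A) (x := -((1:ℝ)/2)) (y := (1:ℝ)/2) hAu
    norm_num at this
    rw [hc, hd, show -(1:ℝ)/2 = -((1:ℝ)/2) by norm_num, ← this, CFC.rpow_zero A]
  have hcc : c * c = A := by
    have := CFC.rpow_add (a := A) (x := (1:ℝ)/2) (y := (1:ℝ)/2) hAu
    norm_num at this
    rw [hc, ← this, CFC.rpow_one A]
  have hT : 0 ≤ T := conjugate_nonneg_of_nonneg hB hd0
  have hTsa : IsSelfAdjoint T := .of_nonneg hT
  have hcTc : c * T * c = B := by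
    rw [hTdef]
    calc c * (d * B * d) * c = (c * d) * B * (d * c) := by noncomm_ring
    _ = B := by rw [hcd, hdc, one_mul, mul_one]
  have key := key_cfc_ineq T hT ν r hν0 hν1 hr
  have conj := star_left_conjugate_le_conjugate key c
  rw [(IsSelfAdjoint.of_nonneg hc0).star_eq] at conj
  calc c * T ^ ν * c + (2 * r) • ((1/2 : ℝ) • (A + B) - c * T ^ ((1:ℝ)/2) * c)
      = c * (T ^ ν + (2*r) • ((1/2:ℝ) • (1 + T) - T ^ ((1:ℝ)/2))) * c := by
        rw [← hcc, ← hcTc]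
        simp only [mul_add, add_mul, mul_sub, sub_mul, mul_smul_comm, smul_mul_assoc,
          mul_one, one_mul]
    _ ≤ c * ((1 - ν) • 1 + ν • T) * c := conj
    _ = (1 - ν) • A + ν • B := by
        simp only [mul_add, add_mul, mul_smul_comm, smul_mul_assoc, mul_one, one_mul,
          hcc, hcTc]
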